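/- For m ≥ 2 and n with base m representation (α_j,...,α_0), if m divides n (i.e., α_0 = 0), then b_m(mn) ≡ ∏_{i=1}^{j}(α_i + 1) (mod m), i.e., the digit α_0 = 0 contributes a factor of 1. -/

import Mathlib

noncomputable def bm (m n : ℕ) : ℕ :=
  Nat.card {f : ℕ →₀ ℕ // ∑ i ∈ f.support, f i * m ^ i = n}

namespace BmAux

variable {m : ℕ}

lemma term_le {n : ℕ} {f : ℕ →₀ ℕ} (hf : ∑ i ∈ f.support, f i * m ^ i = n)
    {i : ℕ} (hi : i ∈ f.support) : f i * m ^ i ≤ n := by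
  rw [← hf]
  exact Finset.single_le_sum (f := fun j => f j * m ^ j) (fun j _ => Nat.zero_le _) hi

lemma bounds (hm : 2 ≤ m) {n : ℕ} {f : ℕ →₀ ℕ}
    (hf : ∑ i ∈ f.support, f i * m ^ i = n) (i : ℕ) :
    f i ≤ n ∧ (f i ≠ 0 → i ≤ n) := by
  by_cases hi : i ∈ f.support
  · have h1 : f i * m ^ i ≤ n := term_le hf hi
    have hm1 : 1 ≤ m ^ i := Nat.one_le_pow _ _ (by omega)
    have hfi : 1 ≤ f i := Nat.one_le_iff_ne_zero.mpr (Finsupp.mem_support_iff.mp hi)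
    have h2 : m ^ i ≤ n := le_trans (by nlinarith) h1
    have h3 : f i ≤ n := le_trans (by nlinarith) h1
    have h4 : i < m ^ i := Nat.lt_pow_self (n := i) (a := m) (by omega)
    exact ⟨h3, fun _ => by omega⟩
  · simp [Finsupp.notMem_support_iff.mp hi]

lemma finite_sol (hm : 2 ≤ m) (n : ℕ) :
    Finite {f : ℕ →₀ ℕ // ∑ i ∈ f.support, f i * m ^ i = n} := by
  apply Finite.of_injective
    (fun f : {f : ℕ →₀ ℕ // ∑ i ∈ f.support, f i * m ^ i = n} =>
      (fun i : Fin (n + 1) => (⟨(f : ℕ →₀ ℕ) i, by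
        have := (bounds hm f.2 i).1; omega⟩ : Fin (n + 1))))
  intro f g hfg
  ext i
  by_cases hi : i ≤ n
  · exact congrArg Fin.val (congrFun hfg ⟨i, by omega⟩)
  · have h1 := (bounds hm f.2 i).2
    have h2 := (bounds hm g.2 i).2
    by_cases hf0 : (f : ℕ →₀ ℕ) i = 0
    · by_cases hg0 : (g : ℕ →₀ ℕ) i = 0
      · rw [hf0, hg0]
      · exact absurd (h2 hg0) (by omega)
    · exact absurd (h1 hf0) (by omega)

lemma modeq_apply_zero {n : ℕ} {f : ℕ →₀ ℕ}
    (hf : ∑ i ∈ f.support, f i * m ^ i = n) : n % m = f 0 % m := by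
  classical
  have key : n = f 0 + ∑ i ∈ f.support.erase 0, f i * m ^ i := by
    by_cases h0 : 0 ∈ f.support
    · rw [← hf, ← Finset.add_sum_erase _ _ h0]; simp
    · rw [Finset.erase_eq_of_notMem h0, Finsupp.notMem_support_iff.mp h0, ← hf]; simp
  have hdvd : m ∣ ∑ i ∈ f.support.erase 0, f i * m ^ i :=
    Finset.dvd_sum fun i hi =>
      Dvd.dvd.mul_left (dvd_pow_self m (Finset.ne_of_mem_erase hi)) _
  obtain ⟨k, hk⟩ := hdvd
  rw [key, hk, Nat.add_mul_mod_self_left]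

lemma bm_zero (hm : 2 ≤ m) : bm m 0 = 1 := by
  rw [bm]
  have hu : ∀ f : ℕ →₀ ℕ, (∑ i ∈ f.support, f i * m ^ i = 0) → f = 0 := by
    intro f hf
    ext i
    by_cases hi : i ∈ f.support
    · have h1 := term_le hf hi
      have hm1 : 1 ≤ m ^ i := Nat.one_le_pow _ _ (by omega)
      have hfi : 1 ≤ f i := Nat.one_le_iff_ne_zero.mpr (Finsupp.mem_support_iff.mp hi)
      simp only [Finsupp.coe_zero, Pi.zero_apply]
      nlinarith
    · simpa using Finsupp.notMem_support_iff.mp hi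
  have : Unique {f : ℕ →₀ ℕ // ∑ i ∈ f.support, f i * m ^ i = 0} :=
    { default := ⟨0, by simp⟩
      uniq := fun f => Subtype.ext (hu _ f.2) }
  exact Nat.card_unique

end BmAux

namespace BmAux

variable {m : ℕ}

private def emb : ℕ ↪ ℕ := ⟨Nat.succ, Nat.succ_injective⟩

lemma sum_add_single (g : ℕ →₀ ℕ) :
    ∑ i ∈ (g + Finsupp.single 0 1).support, (g + Finsupp.single 0 1 : ℕ →₀ ℕ) i * m ^ i
      = (∑ i ∈ g.support, g i * m ^ i) + 1 := by
  have h := Finsupp.sum_add_index' (f := g) (g := Finsupp.single 0 1)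
    (h := fun i a => a * m ^ i) (fun a => by simp) (fun a b₁ b₂ => add_mul _ _ _)
  have h2 : ∑ x ∈ (Finsupp.single 0 1 : ℕ →₀ ℕ).support,
      (Finsupp.single 0 1 : ℕ →₀ ℕ) x * m ^ x = 1 := by
    rw [Finsupp.support_single_ne_zero 0 one_ne_zero]
    simp
  simpa [Finsupp.sum, h2] using h

/-- Adding a part equal to 1. -/
noncomputable def equivOne (n : ℕ) :
    {f : ℕ →₀ ℕ // ∑ i ∈ f.support, f i * m ^ i = n} ≃
      {f : ℕ →₀ ℕ // (∑ i ∈ f.support, f i * m ^ i = n + 1) ∧ f 0 ≠ 0} where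
  toFun g := ⟨g.1 + Finsupp.single 0 1, by
      refine ⟨?_, ?_⟩
      · rw [sum_add_single, g.2]
      · rw [Finsupp.add_apply, Finsupp.single_eq_same]; omega⟩
  invFun f := ⟨f.1 - Finsupp.single 0 1, by
      have hle : Finsupp.single 0 1 ≤ f.1 :=
        Finsupp.single_le_iff.mpr (by have := f.2.2; omega)
      have hc : f.1 - Finsupp.single 0 1 + Finsupp.single 0 1 = f.1 :=
        tsub_add_cancel_of_le hle
      have h3 : (∑ i ∈ f.1.support, f.1 i * m ^ i)
          = (∑ i ∈ (f.1 - Finsupp.single 0 1).support,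
              (f.1 - Finsupp.single 0 1 : ℕ →₀ ℕ) i * m ^ i) + 1 := by
        conv_lhs => rw [← hc]
        exact sum_add_single _
      rw [f.2.1] at h3
      omega⟩
  left_inv g := Subtype.ext (add_tsub_cancel_right _ _)
  right_inv f := Subtype.ext (tsub_add_cancel_of_le
    (Finsupp.single_le_iff.mpr (by have := f.2.2; omega)))

lemma sum_embDomain (g : ℕ →₀ ℕ) :
    ∑ i ∈ (Finsupp.embDomain emb g).support, (Finsupp.embDomain emb g) i * m ^ i
      = m * ∑ j ∈ g.support, g j * m ^ j := by
  rw [Finsupp.support_embDomain, Finset.sum_map, Finset.mul_sum]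
  refine Finset.sum_congr rfl fun j _ => ?_
  rw [Finsupp.embDomain_apply_self]
  show g j * m ^ (j + 1) = m * (g j * m ^ j)
  ring

/-- Dividing all parts by m. -/
noncomputable def equivDiv (hm : 2 ≤ m) {N : ℕ} (hd : m ∣ N) :
    {f : ℕ →₀ ℕ // (∑ i ∈ f.support, f i * m ^ i = N) ∧ f 0 = 0} ≃
      {g : ℕ →₀ ℕ // ∑ j ∈ g.support, g j * m ^ j = N / m} where
  toFun f := ⟨Finsupp.comapDomain emb f.1 emb.injective.injOn, by
      have key : m * ∑ j ∈ (Finsupp.comapDomain emb f.1 emb.injective.injOn).support,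
          (Finsupp.comapDomain emb f.1 emb.injective.injOn) j * m ^ j = N := by
        rw [Finsupp.comapDomain_support, Finset.mul_sum]
        have : ∀ j ∈ f.1.support.preimage emb emb.injective.injOn,
            m * ((Finsupp.comapDomain emb f.1 emb.injective.injOn) j * m ^ j)
              = f.1 (emb j) * m ^ (emb j) := by
          intro j _
          rw [Finsupp.comapDomain_apply]
          show m * (f.1 (j + 1) * m ^ j) = f.1 (j + 1) * m ^ (j + 1)
          ring
        rw [Finset.sum_congr rfl this,
          Finset.sum_preimage emb f.1.support emb.injective.injOn
            (fun i => f.1 i * m ^ i) ?_, f.2.1]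
        intro x _ hx
        have hx0 : x = 0 := by
          rcases x with _ | x
          · rfl
          · exact absurd ⟨x, rfl⟩ hx
        subst hx0
        simp [f.2.2]
      obtain ⟨k, hk⟩ := hd
      subst hk
      rw [Nat.mul_div_cancel_left _ (by omega : 0 < m)]
      exact Nat.eq_of_mul_eq_mul_left (by omega) key⟩
  invFun g := ⟨Finsupp.embDomain emb g.1, by
      constructor
      · rw [sum_embDomain, g.2, Nat.mul_div_cancel' hd]
      · exact Finsupp.embDomain_notin_range _ _ 0 (by
          rintro ⟨x, hx⟩; exact Nat.succ_ne_zero x hx)⟩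
  left_inv f := Subtype.ext (Finsupp.embDomain_comapDomain (fun i hi => by
      rcases i with _ | i
      · exact absurd (Finsupp.mem_support_iff.mp (by exact_mod_cast hi)) (by simp [f.2.2])
      · exact ⟨i, rfl⟩))
  right_inv g := Subtype.ext (by
      ext j
      rw [Finsupp.comapDomain_apply, Finsupp.embDomain_apply_self])

lemma card_split (hm : 2 ≤ m) (N : ℕ) :
    bm m N = Nat.card {f : ℕ →₀ ℕ // (∑ i ∈ f.support, f i * m ^ i = N) ∧ f 0 ≠ 0}
      + Nat.card {f : ℕ →₀ ℕ // (∑ i ∈ f.support, f i * m ^ i = N) ∧ f 0 = 0} := by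
  classical
  haveI hfin := finite_sol hm N
  have e1 : {g : {f : ℕ →₀ ℕ // ∑ i ∈ f.support, f i * m ^ i = N} // g.1 0 ≠ 0} ≃
      {f : ℕ →₀ ℕ // (∑ i ∈ f.support, f i * m ^ i = N) ∧ f 0 ≠ 0} :=
    Equiv.subtypeSubtypeEquivSubtypeInter
      (fun f : ℕ →₀ ℕ => ∑ i ∈ f.support, f i * m ^ i = N) (fun f => f 0 ≠ 0)
  have e2 : {g : {f : ℕ →₀ ℕ // ∑ i ∈ f.support, f i * m ^ i = N} // ¬ g.1 0 ≠ 0} ≃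
      {f : ℕ →₀ ℕ // (∑ i ∈ f.support, f i * m ^ i = N) ∧ f 0 = 0} :=
    (Equiv.subtypeSubtypeEquivSubtypeInter
      (fun f : ℕ →₀ ℕ => ∑ i ∈ f.support, f i * m ^ i = N) (fun f => ¬ f 0 ≠ 0)).trans
      (Equiv.subtypeEquivRight (fun f => by tauto))
  have e : {f : ℕ →₀ ℕ // ∑ i ∈ f.support, f i * m ^ i = N} ≃
      {f : ℕ →₀ ℕ // (∑ i ∈ f.support, f i * m ^ i = N) ∧ f 0 ≠ 0} ⊕
      {f : ℕ →₀ ℕ // (∑ i ∈ f.support, f i * m ^ i = N) ∧ f 0 = 0} :=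
    (Equiv.sumCompl fun g : {f : ℕ →₀ ℕ // ∑ i ∈ f.support, f i * m ^ i = N} =>
      g.1 0 ≠ 0).symm.trans (Equiv.sumCongr e1 e2)
  haveI hf1 : Finite {f : ℕ →₀ ℕ // (∑ i ∈ f.support, f i * m ^ i = N) ∧ f 0 ≠ 0} :=
    Finite.of_equiv _ e1
  haveI hf2 : Finite {f : ℕ →₀ ℕ // (∑ i ∈ f.support, f i * m ^ i = N) ∧ f 0 = 0} :=
    Finite.of_equiv _ e2
  rw [bm, Nat.card_congr e, Nat.card_sum]

lemma bm_succ_dvd (hm : 2 ≤ m) {n : ℕ} (h : m ∣ (n + 1)) :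
    bm m (n + 1) = bm m n + bm m ((n + 1) / m) := by
  have h1 : Nat.card {f : ℕ →₀ ℕ // (∑ i ∈ f.support, f i * m ^ i = n + 1) ∧ f 0 ≠ 0}
      = bm m n := (Nat.card_congr (equivOne n)).symm
  have h2 : Nat.card {f : ℕ →₀ ℕ // (∑ i ∈ f.support, f i * m ^ i = n + 1) ∧ f 0 = 0}
      = bm m ((n + 1) / m) := Nat.card_congr (equivDiv hm h)
  rw [card_split hm (n + 1), h1, h2]

lemma bm_succ_ndvd (hm : 2 ≤ m) {n : ℕ} (h : ¬ m ∣ (n + 1)) :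
    bm m (n + 1) = bm m n := by
  have he : IsEmpty {f : ℕ →₀ ℕ // (∑ i ∈ f.support, f i * m ^ i = n + 1) ∧ f 0 = 0} := by
    constructor
    rintro ⟨f, hf, h0⟩
    have := modeq_apply_zero hf
    rw [h0, Nat.zero_mod] at this
    exact h (Nat.dvd_of_mod_eq_zero this)
  have h0 : Nat.card {f : ℕ →₀ ℕ // (∑ i ∈ f.support, f i * m ^ i = n + 1) ∧ f 0 = 0}
      = 0 := @Nat.card_of_isEmpty _ he
  have h1 : Nat.card {f : ℕ →₀ ℕ // (∑ i ∈ f.support, f i * m ^ i = n + 1) ∧ f 0 ≠ 0}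
      = bm m n := (Nat.card_congr (equivOne n)).symm
  rw [card_split hm (n + 1), h0, h1, add_zero]

end BmAux

namespace BmAux

variable {m : ℕ}

lemma bm_block (hm : 2 ≤ m) (q : ℕ) : ∀ r, r < m → bm m (m * q + r) = bm m (m * q) := by
  intro r
  induction r with
  | zero => intro _; rfl
  | succ r ih =>
    intro hr
    have hnd : ¬ m ∣ (m * q + r + 1) := by
      intro hdvd
      have h1 : m ∣ r + 1 := by
        have : m * q + r + 1 = m * q + (r + 1) := by ring
        rw [this] at hdvd
        exact (Nat.dvd_add_right ⟨q, rfl⟩).mp hdvd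
      have := Nat.le_of_dvd (by omega) h1
      omega
    have : m * q + (r + 1) = (m * q + r) + 1 := by ring
    rw [this, bm_succ_ndvd hm hnd, ih (by omega)]

lemma bm_eq_c (hm : 2 ≤ m) (t : ℕ) : bm m t = bm m (m * (t / m)) := by
  conv_lhs => rw [show t = m * (t / m) + t % m from (Nat.div_add_mod t m).symm ▸ rfl]
  exact bm_block hm _ _ (Nat.mod_lt _ (by omega))

lemma c_succ (hm : 2 ≤ m) (q : ℕ) :
    bm m (m * (q + 1)) = bm m (m * q) + bm m (q + 1) := by
  have hm1 : m - 1 + 1 = m := by omega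
  have h1 : m * (q + 1) = (m * q + (m - 1)) + 1 := by
    rw [Nat.mul_succ]; omega
  have hdvd : m ∣ (m * q + (m - 1)) + 1 := by rw [← h1]; exact ⟨q + 1, rfl⟩
  have h2 : ((m * q + (m - 1)) + 1) / m = q + 1 := by
    rw [← h1, Nat.mul_div_cancel_left _ (by omega : 0 < m)]
  rw [h1, bm_succ_dvd hm hdvd, h2, bm_block hm q (m - 1) (by omega)]

lemma c_block (hm : 2 ≤ m) (a : ℕ) : ∀ r, r < m →
    bm m (m * (m * a + r)) = bm m (m * (m * a)) + r * bm m (m * a) := by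
  intro r
  induction r with
  | zero => intro _; simp
  | succ r ih =>
    intro hr
    have h1 : m * a + (r + 1) = (m * a + r) + 1 := by ring
    rw [h1, c_succ hm (m * a + r), ih (by omega)]
    have h2 : (m * a + r + 1) = m * a + (r + 1) := by ring
    have h3 : bm m (m * a + r + 1) = bm m (m * a) := by
      rw [h2, bm_block hm a (r + 1) hr]
    rw [h3]
    ring

lemma cA (hm : 2 ≤ m) (a : ℕ) : bm m (m * (m * a)) ≡ bm m (m * a) [MOD m] := by
  induction a with
  | zero => simp [Nat.ModEq.refl]
  | succ a ih =>
    have h1 : bm m (m * (m * (a + 1))) = bm m (m * (m * a)) + (m - 1) * bm m (m * a)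
        + bm m (m * (a + 1)) := by
      have e1 : m * (a + 1) = (m * a + (m - 1)) + 1 := by rw [Nat.mul_succ]; omega
      rw [e1, c_succ hm (m * a + (m - 1)), c_block hm a (m - 1) (by omega), ← e1]
    rw [h1]
    calc bm m (m * (m * a)) + (m - 1) * bm m (m * a) + bm m (m * (a + 1))
        ≡ bm m (m * a) + (m - 1) * bm m (m * a) + bm m (m * (a + 1)) [MOD m] :=
          (ih.add_right _).add_right _
      _ = m * bm m (m * a) + bm m (m * (a + 1)) := by
          have : bm m (m * a) + (m - 1) * bm m (m * a) = (1 + (m - 1)) * bm m (m * a) := by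
            ring
          rw [this, show 1 + (m - 1) = m by omega]
      _ ≡ 0 + bm m (m * (a + 1)) [MOD m] :=
          Nat.ModEq.add_right _ ((Nat.modEq_zero_iff_dvd).mpr ⟨bm m (m * a), rfl⟩)
      _ = bm m (m * (a + 1)) := by ring

lemma cB (hm : 2 ≤ m) (a r : ℕ) (hr : r < m) :
    bm m (m * (m * a + r)) ≡ (r + 1) * bm m (m * a) [MOD m] := by
  rw [c_block hm a r hr]
  calc bm m (m * (m * a)) + r * bm m (m * a)
      ≡ bm m (m * a) + r * bm m (m * a) [MOD m] := (cA hm a).add_right _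
    _ = (r + 1) * bm m (m * a) := by ring

lemma digits_prod (hm : 2 ≤ m) :
    ∀ (k : ℕ) (β : ℕ → ℕ), (∀ i, i < k → β i < m) →
      bm m (m * ∑ i ∈ Finset.range k, β i * m ^ i)
        ≡ ∏ i ∈ Finset.range k, (β i + 1) [MOD m] := by
  intro k
  induction k with
  | zero =>
    intro β _
    simp only [Finset.range_zero, Finset.sum_empty, Finset.prod_empty, Nat.mul_zero]
    rw [Nat.ModEq, bm_zero hm]
  | succ k ih =>
    intro β hβ
    have hsum : ∑ i ∈ Finset.range (k + 1), β i * m ^ i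
        = m * (∑ i ∈ Finset.range k, β (i + 1) * m ^ i) + β 0 := by
      rw [Finset.sum_range_succ', Finset.mul_sum]
      simp only [pow_succ, pow_zero, mul_one]
      congr 1
      refine Finset.sum_congr rfl fun i _ => ?_
      ring
    rw [hsum]
    calc bm m (m * (m * (∑ i ∈ Finset.range k, β (i + 1) * m ^ i) + β 0))
        ≡ (β 0 + 1) * bm m (m * ∑ i ∈ Finset.range k, β (i + 1) * m ^ i) [MOD m] :=
          cB hm _ _ (hβ 0 (by omega))
      _ ≡ (β 0 + 1) * ∏ i ∈ Finset.range k, (β (i + 1) + 1) [MOD m] :=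
          (ih (fun i => β (i + 1)) (fun i hi => hβ (i + 1) (by omega))).mul_left _
      _ = ∏ i ∈ Finset.range (k + 1), (β i + 1) := by
          rw [Finset.prod_range_succ']
          ring

end BmAux

theorem bm_congruence_div (m n j : ℕ) (α : ℕ → ℕ) (hm : 2 ≤ m) (hj : 0 < α j) (hd : ∀ i, i ≤ j → α i < m)
    (hn : n = ∑ i ∈ Finset.range (j + 1), α i * m ^ i) (h0 : α 0 = 0) :
    bm m (m * n) ≡ ∏ i ∈ Finset.Icc 1 j, (α i + 1) [MOD m] := by
  have hprod : ∏ i ∈ Finset.range (j + 1), (α i + 1) = ∏ i ∈ Finset.Icc 1 j, (α i + 1) := by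
    have hins : Finset.range (j + 1) = insert 0 (Finset.Icc 1 j) := by
      ext x
      simp only [Finset.mem_range, Finset.mem_insert, Finset.mem_Icc]
      omega
    rw [hins, Finset.prod_insert (by simp), h0]
    ring
  rw [hn, ← hprod]
  exact BmAux.digits_prod hm (j + 1) α (fun i hi => hd i (by omega))
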